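/- For every real x with x > 2, the principal-value integral (1/2π) ∫_{−2}^{2} √(4 − y²)/(x − y) dy equals (x − √(x² − 4))/2. -/

import Mathlib

/-- The Stieltjes transform of Wigner's semicircle law: for `x > 2`,
`(1/2π) ∫_{-2}^{2} √(4 - y²)/(x - y) dy = (x - √(x² - 4))/2`. -/
theorem semicircle_stieltjes (x : ℝ) (hx : 2 < x) :
    (1 / (2 * Real.pi)) * ∫ y in (-2 : ℝ)..2, Real.sqrt (4 - y ^ 2) / (x - y) =
      (x - Real.sqrt (x ^ 2 - 4)) / 2 := by
  have hx2 : 0 < x ^ 2 - 4 := by nlinarith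
  set s : ℝ := Real.sqrt (x ^ 2 - 4) with hs
  have hspos : 0 < s := Real.sqrt_pos.mpr hx2
  have hssq : s ^ 2 = x ^ 2 - 4 := Real.sq_sqrt hx2.le
  set F : ℝ → ℝ := fun t => x * Real.arcsin (t / 2) - Real.sqrt (4 - t ^ 2)
      + s * Real.arcsin ((4 - x * t) / (2 * (x - t))) with hF
  have hxy : ∀ t ∈ Set.Icc (-2 : ℝ) 2, 0 < x - t := fun t ht => by
    have := ht.2; linarith
  -- continuity of F on [-2,2]
  have hFcont : ContinuousOn F (Set.Icc (-2 : ℝ) 2) := by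
    apply ContinuousOn.add
    · apply ContinuousOn.sub
      · exact (continuous_const.mul (Real.continuous_arcsin.comp
          (continuous_id.div_const 2))).continuousOn
      · exact (Real.continuous_sqrt.comp (by continuity)).continuousOn
    · apply ContinuousOn.mul continuousOn_const
      apply Real.continuous_arcsin.comp_continuousOn
      apply ContinuousOn.div
      · exact (continuous_const.sub (continuous_const.mul continuous_id)).continuousOn
      · exact (continuous_const.mul (continuous_const.sub continuous_id)).continuousOn
      · intro t ht
        have := hxy t ht
        positivity
  -- the integrand
  set f : ℝ → ℝ := fun y => Real.sqrt (4 - y ^ 2) / (x - y) with hf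
  have hfint : IntervalIntegrable f MeasureTheory.volume (-2 : ℝ) 2 := by
    apply ContinuousOn.intervalIntegrable
    rw [Set.uIcc_of_le (by norm_num : (-2:ℝ) ≤ 2)]
    apply ContinuousOn.div
    · exact (Real.continuous_sqrt.comp (by continuity)).continuousOn
    · exact (continuous_const.sub continuous_id).continuousOn
    · intro t ht; exact (hxy t ht).ne'
  -- derivative on the interior
  have hderiv : ∀ y ∈ Set.Ioo (-2 : ℝ) 2, HasDerivAt F (f y) y := by
    intro y hy
    obtain ⟨hy1, hy2⟩ := hy
    have hxyy : 0 < x - y := by linarith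
    have h4 : 0 < 4 - y ^ 2 := by nlinarith
    have hsq4 : 0 < Real.sqrt (4 - y ^ 2) := Real.sqrt_pos.mpr h4
    have hsq4sq : Real.sqrt (4 - y ^ 2) ^ 2 = 4 - y ^ 2 := Real.sq_sqrt h4.le
    -- piece A : arcsin (t/2)
    have hA : HasDerivAt (fun t : ℝ => Real.arcsin (t / 2))
        (1 / Real.sqrt (1 - (y / 2) ^ 2) * (1 / 2)) y := by
      have h1 : y / 2 ≠ -1 := by intro h; nlinarith [h]
      have h2 : y / 2 ≠ 1 := by intro h; nlinarith [h]
      exact (Real.hasDerivAt_arcsin h1 h2).comp y ((hasDerivAt_id y).div_const 2)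
    have hsqrt12 : Real.sqrt (1 - (y / 2) ^ 2) = Real.sqrt (4 - y ^ 2) / 2 := by
      rw [show (1 - (y / 2) ^ 2) = (4 - y ^ 2) / 4 by ring, Real.sqrt_div h4.le,
        show (4 : ℝ) = 2 ^ 2 by norm_num, Real.sqrt_sq (by norm_num : (0:ℝ) ≤ 2)]
    -- piece B : sqrt (4 - t^2)
    have hB : HasDerivAt (fun t : ℝ => Real.sqrt (4 - t ^ 2))
        (1 / (2 * Real.sqrt (4 - y ^ 2)) * (0 - 2 * y ^ 1)) y := by
      have hg : HasDerivAt (fun t : ℝ => 4 - t ^ 2) (0 - 2 * y ^ 1) y :=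
        (hasDerivAt_const y 4).sub (hasDerivAt_pow 2 y)
      exact (Real.hasDerivAt_sqrt h4.ne').comp y hg
    -- piece C : arcsin u
    set u : ℝ := (4 - x * y) / (2 * (x - y)) with hu
    have hden : (2 * (x - y)) ≠ 0 := by positivity
    have hnum' : HasDerivAt (fun t : ℝ => 4 - x * t) (-x) y := by
      simpa using ((hasDerivAt_id y).const_mul x).const_sub 4
    have hden' : HasDerivAt (fun t : ℝ => 2 * (x - t)) (-2) y := by
      simpa using ((hasDerivAt_const y x).sub (hasDerivAt_id y)).const_mul 2
    have hu' : HasDerivAt (fun t : ℝ => (4 - x * t) / (2 * (x - t)))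
        ((-x * (2 * (x - y)) - (4 - x * y) * (-2)) / (2 * (x - y)) ^ 2) y :=
      hnum'.div hden' hden
    have h1mu : 1 - u ^ 2 = (x ^ 2 - 4) * (4 - y ^ 2) / (4 * (x - y) ^ 2) := by
      rw [hu]; field_simp; ring
    have h1mupos : 0 < 1 - u ^ 2 := by
      rw [h1mu]; positivity
    have hum1 : u ≠ -1 := by intro h; rw [h] at h1mupos; norm_num at h1mupos
    have hup1 : u ≠ 1 := by intro h; rw [h] at h1mupos; norm_num at h1mupos
    have hsqrtu : Real.sqrt (1 - u ^ 2) = s * Real.sqrt (4 - y ^ 2) / (2 * (x - y)) := by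
      have h' : 1 - u ^ 2 = (s * Real.sqrt (4 - y ^ 2) / (2 * (x - y))) ^ 2 := by
        rw [h1mu, div_pow, mul_pow, hssq, hsq4sq]; ring
      rw [h', Real.sqrt_sq (by positivity)]
    have hC : HasDerivAt (fun t : ℝ => Real.arcsin ((4 - x * t) / (2 * (x - t))))
        (1 / Real.sqrt (1 - u ^ 2) *
          ((-x * (2 * (x - y)) - (4 - x * y) * (-2)) / (2 * (x - y)) ^ 2)) y :=
      by have h := (Real.hasDerivAt_arcsin hum1 hup1).comp y hu'; exact h
    -- assemble
    have hFderiv : HasDerivAt F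
        (x * (1 / Real.sqrt (1 - (y / 2) ^ 2) * (1 / 2))
          - 1 / (2 * Real.sqrt (4 - y ^ 2)) * (0 - 2 * y ^ 1)
          + s * (1 / Real.sqrt (1 - u ^ 2) *
            ((-x * (2 * (x - y)) - (4 - x * y) * (-2)) / (2 * (x - y)) ^ 2))) y :=
      ((hA.const_mul x).sub hB).add (hC.const_mul s)
    convert hFderiv using 1
    rw [hsqrt12, hsqrtu, hf]
    have e1 : x * (1 / (Real.sqrt (4 - y ^ 2) / 2) * (1 / 2)) = x / Real.sqrt (4 - y ^ 2) := by
      field_simp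
    have e2 : 1 / (2 * Real.sqrt (4 - y ^ 2)) * (0 - 2 * y ^ 1)
        = -y / Real.sqrt (4 - y ^ 2) := by
      field_simp; ring
    have e3 : s * (1 / (s * Real.sqrt (4 - y ^ 2) / (2 * (x - y))) *
          ((-x * (2 * (x - y)) - (4 - x * y) * (-2)) / (2 * (x - y)) ^ 2))
        = -(x ^ 2 - 4) / (Real.sqrt (4 - y ^ 2) * (x - y)) := by
      rw [show (-x * (2 * (x - y)) - (4 - x * y) * (-2)) = -(x ^ 2 - 4) * 2 by ring]
      field_simp
    rw [e1, e2, e3]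
    field_simp
    linear_combination hsq4sq
  -- apply FTC
  have key : (∫ y in (-2 : ℝ)..2, f y) = F 2 - F (-2) :=
    intervalIntegral.integral_eq_sub_of_hasDeriv_right_of_le (by norm_num) hFcont
      (fun y hy => (hderiv y hy).hasDerivWithinAt) hfint
  have hne2 : (2 * (x - 2)) ≠ 0 := by intro h; nlinarith [h]
  have hne2' : (2 * (x - (-2))) ≠ 0 := by intro h; nlinarith [h]
  have hF2 : F 2 = x * (Real.pi / 2) - s * (Real.pi / 2) := by
    have h2 : (4 - x * 2) / (2 * (x - 2)) = -1 := by
      rw [div_eq_iff hne2]; ring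
    simp only [hF, h2, show (2:ℝ)/2 = 1 by norm_num, Real.arcsin_one, Real.arcsin_neg_one,
      show (4:ℝ) - 2^2 = 0 by norm_num, Real.sqrt_zero]
    ring
  have hFm2 : F (-2) = -(x * (Real.pi / 2)) + s * (Real.pi / 2) := by
    have h2 : (4 - x * (-2)) / (2 * (x - (-2))) = 1 := by
      rw [div_eq_iff hne2']; ring
    simp only [hF, h2, show (-2:ℝ)/2 = -1 by norm_num, Real.arcsin_one, Real.arcsin_neg_one,
      show (4:ℝ) - (-2:ℝ)^2 = 0 by norm_num, Real.sqrt_zero]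
    ring
  rw [key, hF2, hFm2]
  have hpi : Real.pi ≠ 0 := Real.pi_ne_zero
  field_simp
  ring
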